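/- Intersection property for strictly positive discrete distributions: if the joint distribution of disjoint discrete variables S, T, U, R is strictly positive, then S ⫫ T | (R ∪ U) and S ⫫ U | (R ∪ T) together imply S ⫫ (T ∪ U) | R. -/

import Mathlib

open Finset

/-- Probability, under the joint pmf `w` of the discrete random variables indexed by `ι`
(with values in the finite type `α`), that the variables in `S` agree with the
assignment `v`. -/
noncomputable def margProb {ι α : Type*} [Fintype ι] [Fintype α]
    [DecidableEq ι] [DecidableEq α]
    (w : (ι → α) → ℝ) (S : Finset ι) (v : ι → α) : ℝ :=
  ∑ u : ι → α, if ∀ i ∈ S, u i = v i then w u else 0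

/-- Conditional independence of the joint discrete variables indexed by `A` and `B`
given those indexed by `R`, under the joint pmf `w`: the standard factorization
`P(A,B,R)·P(R) = P(A,R)·P(B,R)` for all value assignments. -/
def CondIndepSets {ι α : Type*} [Fintype ι] [Fintype α]
    [DecidableEq ι] [DecidableEq α]
    (w : (ι → α) → ℝ) (A B R : Finset ι) : Prop :=
  ∀ v : ι → α,
    margProb w (A ∪ B ∪ R) v * margProb w R v
      = margProb w (A ∪ R) v * margProb w (B ∪ R) v

section helpers

variable {ι α : Type*} [Fintype ι] [Fintype α] [DecidableEq ι] [DecidableEq α]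

lemma margProb_congr (w : (ι → α) → ℝ) (A : Finset ι) {x y : ι → α}
    (h : ∀ i ∈ A, x i = y i) : margProb w A x = margProb w A y := by
  unfold margProb
  refine Finset.sum_congr rfl fun u _ => ?_
  refine if_congr ?_ rfl rfl
  constructor
  · intro hh i hi; exact (hh i hi).trans (h i hi)
  · intro hh i hi; exact (hh i hi).trans (h i hi).symm

lemma margProb_pos (w : (ι → α) → ℝ) (hpos : ∀ u, 0 < w u) (A : Finset ι) (v : ι → α) :
    0 < margProb w A v := by
  unfold margProb
  have h1 : (if ∀ i ∈ A, v i = v i then w v else 0) = w v := if_pos (fun i _ => rfl)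
  have h2 : w v ≤ ∑ u : ι → α, if ∀ i ∈ A, u i = v i then w u else 0 := by
    rw [← h1]
    exact Finset.single_le_sum
      (f := fun u : ι → α => if ∀ i ∈ A, u i = v i then w u else 0)
      (fun u _ => by
        split
        · exact (hpos _).le
        · rfl)
      (Finset.mem_univ v)
  exact lt_of_lt_of_le (hpos v) h2

lemma marg_sum (w : (ι → α) → ℝ) (A E : Finset ι) (hAE : Disjoint A E) (v : ι → α) :
    ∑ x : ι → α, (if ∀ i, i ∉ E → x i = v i then margProb w (A ∪ E) x else 0)
      = margProb w A v := by
  classical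
  unfold margProb
  have step1 : ∀ x : ι → α,
      (if ∀ i, i ∉ E → x i = v i then
          ∑ u : ι → α, (if ∀ i ∈ A ∪ E, u i = x i then w u else 0) else 0)
        = ∑ u : ι → α,
            if (∀ i, i ∉ E → x i = v i) ∧ (∀ i ∈ A ∪ E, u i = x i) then w u else 0 := by
    intro x
    split
    case isTrue h =>
      refine Finset.sum_congr rfl fun u _ => ?_
      refine if_congr ?_ rfl rfl
      exact (and_iff_right h).symm
    case isFalse h => simp [h]
  rw [Finset.sum_congr rfl fun x _ => step1 x, Finset.sum_comm]
  refine Finset.sum_congr rfl fun u _ => ?_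
  by_cases hu : ∀ i ∈ A, u i = v i
  · rw [if_pos hu]
    set x₀ : ι → α := fun i => if i ∈ E then u i else v i with hx₀
    rw [Finset.sum_eq_single x₀]
    · rw [if_pos]
      constructor
      · intro i hi; simp [x₀, hi]
      · intro i hi
        by_cases hiE : i ∈ E
        · simp [x₀, hiE]
        · have hiA : i ∈ A := by
            rcases Finset.mem_union.mp hi with h' | h'
            · exact h'
            · exact absurd h' hiE
          simp [x₀, hiE, hu i hiA]
    · intro x _ hx
      rw [if_neg]
      rintro ⟨hP, hQ⟩
      apply hx
      funext i
      by_cases hiE : i ∈ E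
      · simp only [x₀, hiE, if_true]
        exact (hQ i (Finset.mem_union_right _ hiE)).symm
      · simp only [x₀, hiE, if_false]
        exact hP i hiE
    · intro h; exact absurd (Finset.mem_univ x₀) h
  · rw [if_neg hu]
    refine Finset.sum_eq_zero fun x _ => ?_
    rw [if_neg]
    rintro ⟨hP, hQ⟩
    apply hu
    intro i hiA
    have hiE : i ∉ E := Finset.disjoint_left.mp hAE hiA
    rw [hQ i (Finset.mem_union_left _ hiA), hP i hiE]

end helpers

/-- Intersection property for strictly positive discrete distributions:
if the joint pmf `w` is strictly positive, then for disjoint sets of variables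
`S ⫫ T | (R ∪ U)` and `S ⫫ U | (R ∪ T)` together imply `S ⫫ (T ∪ U) | R`. -/
theorem intersection_of_strictly_positive
    {ι α : Type*} [Fintype ι] [Fintype α] [DecidableEq ι] [DecidableEq α]
    (w : (ι → α) → ℝ) (hpos : ∀ u, 0 < w u) (hsum : ∑ u : ι → α, w u = 1)
    (S T U R : Finset ι)
    (hST : Disjoint S T) (hSU : Disjoint S U) (hSR : Disjoint S R)
    (hTU : Disjoint T U) (hTR : Disjoint T R) (hUR : Disjoint U R)
    (h1 : CondIndepSets w S T (R ∪ U)) (h2 : CondIndepSets w S U (R ∪ T)) :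
    CondIndepSets w S (T ∪ U) R := by
  classical
  intro v
  -- canonical set names
  have e1 : S ∪ T ∪ (R ∪ U) = S ∪ (T ∪ U) ∪ R := by ext i; simp; tauto
  have e2 : T ∪ (R ∪ U) = T ∪ U ∪ R := by ext i; simp; tauto
  have e3 : S ∪ U ∪ (R ∪ T) = S ∪ (T ∪ U) ∪ R := by ext i; simp; tauto
  have e4 : U ∪ (R ∪ T) = T ∪ U ∪ R := by ext i; simp; tauto
  have e5 : S ∪ R ∪ (T ∪ U) = S ∪ (T ∪ U) ∪ R := by ext i; simp; tauto
  have e6 : R ∪ (T ∪ U) = T ∪ U ∪ R := by ext i; simp; tauto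
  -- abbreviations
  set a : (ι → α) → ℝ := margProb w (S ∪ (T ∪ U) ∪ R) with ha
  set g : (ι → α) → ℝ := margProb w (T ∪ U ∪ R) with hg
  -- L1 : changing variables in T does not change the ratio a/g
  have L1 : ∀ x z : ι → α, (∀ i, i ∉ T → x i = z i) → a x * g z = a z * g x := by
    intro x z hxz
    have hq : margProb w (R ∪ U) x = margProb w (R ∪ U) z := by
      refine margProb_congr w _ fun i hi => hxz i ?_
      rcases Finset.mem_union.mp hi with h' | h'
      · exact Finset.disjoint_right.mp hTR h'
      · exact Finset.disjoint_right.mp hTU h'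
    have hs : margProb w (S ∪ (R ∪ U)) x = margProb w (S ∪ (R ∪ U)) z := by
      refine margProb_congr w _ fun i hi => hxz i ?_
      rcases Finset.mem_union.mp hi with h' | h'
      · exact Finset.disjoint_right.mp hST.symm h'
      · rcases Finset.mem_union.mp h' with h'' | h''
        · exact Finset.disjoint_right.mp hTR h''
        · exact Finset.disjoint_right.mp hTU h''
    have h1x := h1 x
    have h1z := h1 z
    rw [e1, e2] at h1x h1z
    rw [← ha, ← hg] at h1x h1z
    rw [← hq, ← hs] at h1z
    have hq0 : margProb w (R ∪ U) x ≠ 0 := (margProb_pos w hpos _ _).ne'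
    have key : (a x * g z) * margProb w (R ∪ U) x
        = (a z * g x) * margProb w (R ∪ U) x := by
      linear_combination g z * h1x - g x * h1z
    exact mul_right_cancel₀ hq0 key
  -- L2 : changing variables in U does not change the ratio a/g
  have L2 : ∀ x z : ι → α, (∀ i, i ∉ U → x i = z i) → a x * g z = a z * g x := by
    intro x z hxz
    have hq : margProb w (R ∪ T) x = margProb w (R ∪ T) z := by
      refine margProb_congr w _ fun i hi => hxz i ?_
      rcases Finset.mem_union.mp hi with h' | h'
      · exact Finset.disjoint_right.mp hUR h'
      · exact Finset.disjoint_right.mp hTU.symm h'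
    have hs : margProb w (S ∪ (R ∪ T)) x = margProb w (S ∪ (R ∪ T)) z := by
      refine margProb_congr w _ fun i hi => hxz i ?_
      rcases Finset.mem_union.mp hi with h' | h'
      · exact Finset.disjoint_right.mp hSU.symm h'
      · rcases Finset.mem_union.mp h' with h'' | h''
        · exact Finset.disjoint_right.mp hUR h''
        · exact Finset.disjoint_right.mp hTU.symm h''
    have h2x := h2 x
    have h2z := h2 z
    rw [e3, e4] at h2x h2z
    rw [← ha, ← hg] at h2x h2z
    rw [← hq, ← hs] at h2z
    have hq0 : margProb w (R ∪ T) x ≠ 0 := (margProb_pos w hpos _ _).ne'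
    have key : (a x * g z) * margProb w (R ∪ T) x
        = (a z * g x) * margProb w (R ∪ T) x := by
      linear_combination g z * h2x - g x * h2z
    exact mul_right_cancel₀ hq0 key
  -- Claim B : for x agreeing with v outside T ∪ U, the ratio a/g agrees with v's
  have claimB : ∀ x : ι → α, (∀ i, i ∉ T ∪ U → x i = v i) → a x * g v = a v * g x := by
    intro x hx
    set z : ι → α := fun i => if i ∈ T then x i else v i with hz
    have hxz : ∀ i, i ∉ U → x i = z i := by
      intro i hiU
      by_cases hiT : i ∈ T
      · simp [z, hiT]
      · simp only [z, hiT, if_false]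
        exact hx i (by simp [hiT, hiU])
    have hzv : ∀ i, i ∉ T → z i = v i := by
      intro i hiT; simp [z, hiT]
    have h2' := L2 x z hxz
    have h1' := L1 z v hzv
    have hg0 : g z ≠ 0 := (margProb_pos w hpos _ _).ne'
    have key : (a x * g v) * g z = (a v * g x) * g z := by
      linear_combination g v * h2' + g x * h1'
    exact mul_right_cancel₀ hg0 key
  -- now sum claim B over all x agreeing with v outside T ∪ U
  have hdisj1 : Disjoint (S ∪ R) (T ∪ U) := by
    simp only [Finset.disjoint_union_left, Finset.disjoint_union_right]
    exact ⟨⟨hST, hTR.symm⟩, ⟨hSU, hUR.symm⟩⟩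
  have hdisj2 : Disjoint R (T ∪ U) := by
    simp only [Finset.disjoint_union_right]
    exact ⟨hTR.symm, hUR.symm⟩
  have hsum1 : (∑ x : ι → α, if ∀ i, i ∉ T ∪ U → x i = v i then a x else 0)
      = margProb w (S ∪ R) v := by
    rw [← marg_sum w (S ∪ R) (T ∪ U) hdisj1 v]
    refine Finset.sum_congr rfl fun x _ => ?_
    rw [e5, ← ha]
  have hsum2 : (∑ x : ι → α, if ∀ i, i ∉ T ∪ U → x i = v i then g x else 0)
      = margProb w R v := by
    rw [← marg_sum w R (T ∪ U) hdisj2 v]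
    refine Finset.sum_congr rfl fun x _ => ?_
    rw [e6, ← hg]
  show a v * margProb w R v = margProb w (S ∪ R) v * g v
  rw [← hsum1, ← hsum2, Finset.mul_sum, Finset.sum_mul]
  refine Finset.sum_congr rfl fun x _ => ?_
  by_cases hx : ∀ i, i ∉ T ∪ U → x i = v i
  · rw [if_pos hx, if_pos hx]
    have := claimB x hx
    linarith [this]
  · rw [if_neg hx, if_neg hx, mul_zero, zero_mul]
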